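/- Let k ≥ 3, h* ≥ 0, R > 0, a > 0, and S : [0,∞) → [0,∞) non-increasing with S = 1 on [0,1] and Ŝ = ∫₀^∞ tS(t)dt < ∞. Define ξ(t) = k S(t/a) and ψ(t) = ∫₀^t (e^{h*s}/s^{k-1})[∫₀^s e^{-h*σ}σ^{k-1}ξ(σ)dσ]ds. Then ψ(t) ≤ (e^{h*R} k Ŝ /(k−2))·a² for all t ∈ (0,R]. -/

import Mathlib

open MeasureTheory

/-- L∞ bound in case k ≥ 3. With ξ(t) = k S(t/a) and
ψ(t) = ∫₀^t (e^{h*s}/s^{k-1})[∫₀^s e^{-h*σ}σ^{k-1}ξ(σ)dσ]ds, where S is non-increasing,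
S = 1 on [0,1] and Ŝ = ∫₀^∞ tS(t)dt < ∞, one has ψ(t) ≤ (e^{h*R} k Ŝ/(k−2))·a² for
all t ∈ (0,R]. -/
theorem stmt7 (k : ℕ) (hk : 3 ≤ k) (hstar R a : ℝ) (hhs : 0 ≤ hstar) (hR : 0 < R)
    (ha : 0 < a)
    (S : ℝ → ℝ) (hSnn : ∀ t, 0 ≤ t → 0 ≤ S t) (hSanti : AntitoneOn S (Set.Ici 0))
    (hS1 : ∀ t ∈ Set.Icc (0 : ℝ) 1, S t = 1)
    (hSint : IntegrableOn (fun t => t * S t) (Set.Ioi 0)) :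
    ∀ t ∈ Set.Ioc (0 : ℝ) R,
      (∫ s in Set.Ioc (0 : ℝ) t, (Real.exp (hstar * s) / s ^ (k - 1)) *
          ∫ σ in Set.Ioc (0 : ℝ) s,
            Real.exp (-hstar * σ) * σ ^ (k - 1) * ((k : ℝ) * S (σ / a))) ≤
        Real.exp (hstar * R) * k * (∫ u in Set.Ioi (0 : ℝ), u * S u) / ((k : ℝ) - 2)
          * a ^ 2 := by
  intro t ht
  obtain ⟨ht0, htR⟩ := ht
  have hk1 : 1 ≤ k := by omega
  have hk2 : (0:ℝ) < (k:ℝ) - 2 := by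
    have : (3:ℝ) ≤ (k:ℝ) := by exact_mod_cast hk
    linarith
  -- extend S to an antitone function on all of ℝ
  set T : ℝ → ℝ := fun u => S (max u 0) with hTdef
  have hTanti : Antitone T := fun u v huv =>
    hSanti (Set.mem_Ici.mpr (le_max_right u 0)) (Set.mem_Ici.mpr (le_max_right v 0))
      (max_le_max huv le_rfl)
  have hTmeas : Measurable T := hTanti.measurable
  have hT0 : ∀ u, 0 ≤ T u := fun u => hSnn _ (le_max_right u 0)
  have hT1 : ∀ u, T u ≤ 1 := fun u => by
    have h := hSanti (Set.mem_Ici.mpr le_rfl) (Set.mem_Ici.mpr (le_max_right u 0))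
      (le_max_right u 0)
    rwa [hS1 0 ⟨le_rfl, zero_le_one⟩] at h
  have hTS : ∀ u, 0 ≤ u → T u = S u := fun u hu => by
    simp only [hTdef, max_eq_left hu]
  set f : ℝ → ℝ := fun s => Real.exp (hstar * s) / s ^ (k-1) with hfdef
  set g : ℝ → ℝ := fun σ => Real.exp (-hstar * σ) * σ ^ (k-1) * ((k:ℝ) * T (σ / a))
    with hgdef
  have hfm : Measurable f :=
    (Real.measurable_exp.comp (measurable_const.mul measurable_id)).div
      (measurable_id.pow_const _)
  have hgm : Measurable g :=
    ((Real.measurable_exp.comp (measurable_const.mul measurable_id)).mul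
      (measurable_id.pow_const _)).mul
      (measurable_const.mul (hTmeas.comp (measurable_id.div_const a)))
  have hLHS : (∫ s in Set.Ioc (0 : ℝ) t, (Real.exp (hstar * s) / s ^ (k - 1)) *
          ∫ σ in Set.Ioc (0 : ℝ) s,
            Real.exp (-hstar * σ) * σ ^ (k - 1) * ((k : ℝ) * S (σ / a)))
      = ∫ s in Set.Ioc (0:ℝ) t, f s * ∫ σ in Set.Ioc (0:ℝ) s, g σ := by
    refine setIntegral_congr_fun measurableSet_Ioc fun s hs => ?_
    congr 1
    refine setIntegral_congr_fun measurableSet_Ioc fun σ hσ => ?_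
    rw [hgdef]
    simp only
    rw [hTS (σ/a) (le_of_lt (div_pos hσ.1 ha))]
  -- Fubini setup
  set F : ℝ → ℝ → ℝ := fun s σ => if 0 < σ ∧ σ ≤ s ∧ s ≤ R then f s * g σ else 0 with hFdef
  have hDmeas : MeasurableSet {p : ℝ × ℝ | 0 < p.2 ∧ p.2 ≤ p.1 ∧ p.1 ≤ R} :=
    (measurableSet_lt measurable_const measurable_snd).inter
      ((measurableSet_le measurable_snd measurable_fst).inter
        (measurableSet_le measurable_fst measurable_const))
  have hFmeas : Measurable (Function.uncurry F) := by
    have h : Function.uncurry F = fun p : ℝ × ℝ =>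
        if p ∈ {p : ℝ × ℝ | 0 < p.2 ∧ p.2 ≤ p.1 ∧ p.1 ≤ R} then f p.1 * g p.2 else 0 := rfl
    rw [h]
    exact Measurable.ite hDmeas ((hfm.comp measurable_fst).mul (hgm.comp measurable_snd))
      measurable_const
  have hFbound : ∀ p : ℝ × ℝ, ‖Function.uncurry F p‖ ≤ Real.exp (hstar * R) * k := by
    rintro ⟨s, σ⟩
    show ‖F s σ‖ ≤ _
    rw [hFdef]
    simp only
    split_ifs with h
    · obtain ⟨hσ0, hσs, hsR⟩ := h
      have hs0 : 0 < s := lt_of_lt_of_le hσ0 hσs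
      have hf0 : 0 ≤ f s := div_nonneg (Real.exp_nonneg _) (pow_nonneg hs0.le _)
      have hg0 : 0 ≤ g σ := mul_nonneg (mul_nonneg (Real.exp_nonneg _) (pow_nonneg hσ0.le _))
        (mul_nonneg (Nat.cast_nonneg k) (hT0 _))
      rw [Real.norm_eq_abs, abs_of_nonneg (mul_nonneg hf0 hg0)]
      have habs : f s * g σ = Real.exp (hstar*s) * Real.exp (-hstar*σ) *
          (σ^(k-1)/s^(k-1)) * ((k:ℝ) * T (σ/a)) := by
        rw [hfdef, hgdef]; simp only; field_simp
      rw [habs]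
      have hA : Real.exp (hstar*s) ≤ Real.exp (hstar*R) :=
        Real.exp_le_exp.mpr (mul_le_mul_of_nonneg_left hsR hhs)
      have hB : Real.exp (-hstar*σ) ≤ 1 := by
        rw [Real.exp_le_one_iff]
        nlinarith [mul_nonneg hhs hσ0.le]
      have hC1 : σ^(k-1)/s^(k-1) ≤ 1 :=
        (div_le_one (pow_pos hs0 _)).mpr (pow_le_pow_left₀ hσ0.le hσs _)
      have hC0 : (0:ℝ) ≤ σ^(k-1)/s^(k-1) :=
        div_nonneg (pow_nonneg hσ0.le _) (pow_nonneg hs0.le _)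
      have hD1 : (k:ℝ) * T (σ/a) ≤ k := by nlinarith [hT1 (σ/a), Nat.cast_nonneg (α := ℝ) k]
      have hD0 : (0:ℝ) ≤ (k:ℝ) * T (σ/a) := mul_nonneg (Nat.cast_nonneg k) (hT0 _)
      calc Real.exp (hstar*s) * Real.exp (-hstar*σ) * (σ^(k-1)/s^(k-1)) * ((k:ℝ) * T (σ/a))
          ≤ Real.exp (hstar*R) * 1 * 1 * ((k:ℝ)) := by
            refine mul_le_mul (mul_le_mul (mul_le_mul hA hB (Real.exp_nonneg _)
              (Real.exp_nonneg _)) hC1 hC0 (by positivity)) hD1 hD0 (by positivity)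
        _ = Real.exp (hstar*R) * k := by ring
    · simp only [norm_zero]
      positivity
  haveI : Fact (volume (Set.Ioc (0:ℝ) t) < ⊤) := ⟨measure_Ioc_lt_top⟩
  have hFint : Integrable (Function.uncurry F)
      ((volume.restrict (Set.Ioc (0:ℝ) t)).prod (volume.restrict (Set.Ioc (0:ℝ) t))) :=
    Integrable.mono' (integrable_const (Real.exp (hstar*R) * k)) hFmeas.aestronglyMeasurable
      (ae_of_all _ hFbound)
  have hswap := integral_integral_swap hFint
  have hleft : (∫ s in Set.Ioc (0:ℝ) t, ∫ σ in Set.Ioc (0:ℝ) t, F s σ)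
      = ∫ s in Set.Ioc (0:ℝ) t, f s * ∫ σ in Set.Ioc (0:ℝ) s, g σ := by
    refine setIntegral_congr_fun measurableSet_Ioc fun s hs => ?_
    have h1 : (fun σ => F s σ) = (Set.Ioc 0 s).indicator (fun σ => f s * g σ) := by
      funext σ
      rw [hFdef]
      simp only
      by_cases hσ : σ ∈ Set.Ioc (0:ℝ) s
      · rw [Set.indicator_of_mem hσ]
        exact if_pos ⟨hσ.1, hσ.2, hs.2.trans htR⟩
      · rw [Set.indicator_of_notMem hσ]
        exact if_neg fun hc => hσ ⟨hc.1, hc.2.1⟩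
    rw [h1, setIntegral_indicator measurableSet_Ioc,
      Set.inter_eq_self_of_subset_right (Set.Ioc_subset_Ioc le_rfl hs.2), integral_const_mul _ _]
  have hright : (∫ σ in Set.Ioc (0:ℝ) t, ∫ s in Set.Ioc (0:ℝ) t, F s σ)
      = ∫ σ in Set.Ioc (0:ℝ) t, (∫ s in Set.Icc σ t, f s) * g σ := by
    refine setIntegral_congr_fun measurableSet_Ioc fun σ hσ => ?_
    have h1 : (fun s => F s σ) = (Set.Icc σ R).indicator (fun s => f s * g σ) := by
      funext s
      rw [hFdef]
      simp only
      by_cases hs : s ∈ Set.Icc σ R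
      · rw [Set.indicator_of_mem hs]
        exact if_pos ⟨hσ.1, hs.1, hs.2⟩
      · rw [Set.indicator_of_notMem hs]
        exact if_neg fun hc => hs ⟨hc.2.1, hc.2.2⟩
    have h2 : Set.Ioc (0:ℝ) t ∩ Set.Icc σ R = Set.Icc σ t := by
      ext s
      simp only [Set.mem_inter_iff, Set.mem_Ioc, Set.mem_Icc]
      constructor
      · rintro ⟨⟨_, hst⟩, ⟨hσs, _⟩⟩; exact ⟨hσs, hst⟩
      · rintro ⟨hσs, hst⟩; exact ⟨⟨lt_of_lt_of_le hσ.1 hσs, hst⟩, hσs, hst.trans htR⟩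
    rw [h1, setIntegral_indicator measurableSet_Icc, h2, integral_mul_const]
  -- bound on the inner integral after swapping
  have hK : ∀ σ ∈ Set.Ioc (0:ℝ) t, (∫ s in Set.Icc σ t, f s)
      ≤ Real.exp (hstar*R) * (σ ^ ((2:ℤ) - (k:ℤ)) / ((k:ℝ)-2)) := by
    intro σ hσ
    obtain ⟨hσ0, hσt⟩ := hσ
    have hcont1 : ContinuousOn f (Set.Icc σ t) := by
      rw [hfdef]
      apply ContinuousOn.div
      · exact (Real.continuous_exp.comp (continuous_const.mul continuous_id)).continuousOn
      · exact (continuous_pow _).continuousOn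
      · exact fun x hx => pow_ne_zero _ (ne_of_gt (lt_of_lt_of_le hσ0 hx.1))
    have hcont2 : ContinuousOn (fun s : ℝ => Real.exp (hstar*R) * s ^ ((1:ℤ) - (k:ℤ)))
        (Set.Icc σ t) := by
      apply ContinuousOn.mul continuousOn_const
      exact ContinuousOn.zpow₀ continuousOn_id _
        (fun x hx => Or.inl (ne_of_gt (lt_of_lt_of_le hσ0 hx.1)))
    have hint1 : IntegrableOn f (Set.Icc σ t) := hcont1.integrableOn_Icc
    have hint2 : IntegrableOn (fun s : ℝ => Real.exp (hstar*R) * s ^ ((1:ℤ) - (k:ℤ)))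
        (Set.Icc σ t) := hcont2.integrableOn_Icc
    have hpt : ∀ x ∈ Set.Icc σ t, f x ≤ Real.exp (hstar*R) * x ^ ((1:ℤ) - (k:ℤ)) := by
      intro x hx
      have hx0 : 0 < x := lt_of_lt_of_le hσ0 hx.1
      have hzp : (x:ℝ) ^ ((1:ℤ) - (k:ℤ)) = (x^(k-1))⁻¹ := by
        rw [← zpow_natCast x (k-1), ← zpow_neg]
        congr 1
        push_cast [Nat.cast_sub hk1]
        ring
      rw [hfdef]
      simp only
      rw [div_eq_mul_inv, hzp]
      have hexp : Real.exp (hstar*x) ≤ Real.exp (hstar*R) :=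
        Real.exp_le_exp.mpr (mul_le_mul_of_nonneg_left (hx.2.trans htR) hhs)
      exact mul_le_mul_of_nonneg_right hexp (inv_nonneg.mpr (pow_nonneg hx0.le _))
    have hmono := setIntegral_mono_on hint1 hint2 measurableSet_Icc hpt
    have hcalc : (∫ s in Set.Icc σ t, Real.exp (hstar*R) * s ^ ((1:ℤ) - (k:ℤ)))
        = Real.exp (hstar*R) * ((t ^ ((2:ℤ) - (k:ℤ)) - σ ^ ((2:ℤ) - (k:ℤ))) / ((2:ℝ) - (k:ℝ))) := by
      rw [integral_Icc_eq_integral_Ioc, ← intervalIntegral.integral_of_le hσt,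
        intervalIntegral.integral_const_mul]
      congr 1
      have h0mem : (0:ℝ) ∉ Set.uIcc σ t := by
        rw [Set.uIcc_of_le hσt]
        intro hc
        exact absurd hc.1 (not_le.mpr hσ0)
      rw [integral_zpow (Or.inr ⟨by omega, h0mem⟩)]
      have h21 : (1:ℤ) - (k:ℤ) + 1 = 2 - (k:ℤ) := by ring
      rw [h21]
      push_cast
      ring
    have hfinal : Real.exp (hstar*R) * ((t ^ ((2:ℤ) - (k:ℤ)) - σ ^ ((2:ℤ) - (k:ℤ))) / ((2:ℝ) - (k:ℝ)))
        ≤ Real.exp (hstar*R) * (σ ^ ((2:ℤ) - (k:ℤ)) / ((k:ℝ)-2)) := by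
      have hB0 : (0:ℝ) ≤ t ^ ((2:ℤ) - (k:ℤ)) := zpow_nonneg ht0.le _
      have hA0 : (0:ℝ) ≤ σ ^ ((2:ℤ) - (k:ℤ)) := zpow_nonneg hσ0.le _
      apply mul_le_mul_of_nonneg_left _ (Real.exp_nonneg _)
      rw [show ((t:ℝ) ^ ((2:ℤ) - (k:ℤ)) - σ ^ ((2:ℤ) - (k:ℤ))) / ((2:ℝ) - (k:ℝ))
          = (σ ^ ((2:ℤ) - (k:ℤ)) - t ^ ((2:ℤ) - (k:ℤ))) / ((k:ℝ) - 2) from by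
        rw [div_eq_div_iff (by linarith) (by linarith)]; ring]
      exact (div_le_div_iff_of_pos_right hk2).mpr (by linarith)
    exact hmono.trans (hcalc.le.trans hfinal)
  -- integrability of the comparison function
  have hC0' : (0:ℝ) ≤ Real.exp (hstar*R) * k / ((k:ℝ)-2) :=
    div_nonneg (mul_nonneg (Real.exp_nonneg _) (Nat.cast_nonneg k)) hk2.le
  have hphiint : IntegrableOn (fun u => u * T u) (Set.Ioi 0) :=
    hSint.congr_fun (fun u hu => by rw [hTS u (le_of_lt hu)]) measurableSet_Ioi
  have h2 : IntegrableOn (fun x => (a⁻¹*x) * T (a⁻¹*x)) (Set.Ioi 0) := by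
    have := (integrableOn_Ioi_comp_mul_left_iff (fun u => u * T u) 0 (inv_pos.mpr ha)).mpr
      (by simpa using hphiint)
    simpa using this
  have hbint : IntegrableOn (fun σ => σ * T (σ/a)) (Set.Ioi 0) := by
    have h3 : IntegrableOn (fun x => a * ((a⁻¹*x) * T (a⁻¹*x))) (Set.Ioi 0) := h2.const_mul a
    refine h3.congr_fun (fun x hx => ?_) measurableSet_Ioi
    simp only
    rw [inv_mul_eq_div]
    field_simp
  have hbnn : 0 ≤ᵐ[volume.restrict (Set.Ioi (0:ℝ))] fun σ => σ * T (σ/a) := by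
    filter_upwards [ae_restrict_mem measurableSet_Ioi] with σ hσ
    exact mul_nonneg (le_of_lt hσ) (hT0 _)
  -- change of variables
  have hsub : (∫ σ in Set.Ioi (0:ℝ), σ * T (σ/a)) = a^2 * ∫ u in Set.Ioi (0:ℝ), u * S u := by
    have h1 : (∫ σ in Set.Ioi (0:ℝ), σ * T (σ/a))
        = ∫ σ in Set.Ioi (0:ℝ), a * ((fun u => u * T u) (a⁻¹*σ)) := by
      refine setIntegral_congr_fun measurableSet_Ioi fun σ hσ => ?_
      simp only
      rw [inv_mul_eq_div]
      field_simp
    rw [h1, integral_const_mul, integral_comp_mul_left_Ioi (fun u => u * T u) 0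
      (inv_pos.mpr ha), inv_inv, smul_eq_mul, mul_zero]
    rw [setIntegral_congr_fun measurableSet_Ioi
      (fun u (hu : u ∈ Set.Ioi (0:ℝ)) => by simp only; rw [hTS u (le_of_lt hu)] :
        Set.EqOn (fun u => u * T u) (fun u => u * S u) (Set.Ioi 0))]
    ring
  -- pointwise bound for the final integral
  have hmain : ∀ σ ∈ Set.Ioc (0:ℝ) t, (∫ s in Set.Icc σ t, f s) * g σ
      ≤ Real.exp (hstar*R) * k / ((k:ℝ)-2) * (σ * T (σ/a)) := by
    intro σ hσ
    have hσ0 := hσ.1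
    have hg0 : 0 ≤ g σ := mul_nonneg (mul_nonneg (Real.exp_nonneg _) (pow_nonneg hσ0.le _))
      (mul_nonneg (Nat.cast_nonneg k) (hT0 _))
    have hK' := hK σ hσ
    have hzz : σ ^ ((2:ℤ) - (k:ℤ)) * σ ^ (k-1) = σ := by
      rw [← zpow_natCast σ (k-1), ← zpow_add₀ (ne_of_gt hσ0)]
      rw [show ((2:ℤ) - (k:ℤ)) + ((k-1:ℕ):ℤ) = 1 from by push_cast [Nat.cast_sub hk1]; ring,
        zpow_one]
    have hexp1 : Real.exp (-hstar*σ) ≤ 1 := by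
      rw [Real.exp_le_one_iff]
      nlinarith [mul_nonneg hhs hσ0.le]
    calc (∫ s in Set.Icc σ t, f s) * g σ
        ≤ (Real.exp (hstar*R) * (σ ^ ((2:ℤ) - (k:ℤ)) / ((k:ℝ)-2))) * g σ :=
          mul_le_mul_of_nonneg_right hK' hg0
      _ = (Real.exp (hstar*R) * (k:ℝ) / ((k:ℝ)-2)) * (σ ^ ((2:ℤ) - (k:ℤ)) * σ ^ (k-1)) *
            Real.exp (-hstar*σ) * T (σ/a) := by
          rw [hgdef]; simp only; ring
      _ = (Real.exp (hstar*R) * (k:ℝ) / ((k:ℝ)-2)) * σ * Real.exp (-hstar*σ) * T (σ/a) := by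
          rw [hzz]
      _ ≤ (Real.exp (hstar*R) * (k:ℝ) / ((k:ℝ)-2)) * σ * 1 * T (σ/a) := by
          apply mul_le_mul_of_nonneg_right _ (hT0 _)
          apply mul_le_mul_of_nonneg_left hexp1 (mul_nonneg hC0' hσ0.le)
      _ = Real.exp (hstar*R) * k / ((k:ℝ)-2) * (σ * T (σ/a)) := by ring
  -- put everything together
  rw [hLHS, ← hleft, hswap, hright]
  calc (∫ σ in Set.Ioc (0:ℝ) t, (∫ s in Set.Icc σ t, f s) * g σ)
      ≤ ∫ σ in Set.Ioc (0:ℝ) t, Real.exp (hstar*R) * k / ((k:ℝ)-2) * (σ * T (σ/a)) := by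
        refine integral_mono_of_nonneg ?_ ((hbint.mono_set Set.Ioc_subset_Ioi_self).const_mul _) ?_
        · filter_upwards [ae_restrict_mem measurableSet_Ioc] with σ hσ
          refine mul_nonneg (setIntegral_nonneg measurableSet_Icc fun s hs =>
            div_nonneg (Real.exp_nonneg _)
              (pow_nonneg (le_of_lt (lt_of_lt_of_le hσ.1 hs.1)) _)) ?_
          exact mul_nonneg (mul_nonneg (Real.exp_nonneg _) (pow_nonneg hσ.1.le _))
            (mul_nonneg (Nat.cast_nonneg k) (hT0 _))
        · filter_upwards [ae_restrict_mem measurableSet_Ioc] with σ hσ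
          exact hmain σ hσ
    _ = Real.exp (hstar*R) * k / ((k:ℝ)-2) * ∫ σ in Set.Ioc (0:ℝ) t, σ * T (σ/a) :=
        integral_const_mul _ _
    _ ≤ Real.exp (hstar*R) * k / ((k:ℝ)-2) * ∫ σ in Set.Ioi (0:ℝ), σ * T (σ/a) := by
        apply mul_le_mul_of_nonneg_left _ hC0'
        exact setIntegral_mono_set hbint hbnn
          (HasSubset.Subset.eventuallyLE Set.Ioc_subset_Ioi_self)
    _ = Real.exp (hstar * R) * k * (∫ u in Set.Ioi (0 : ℝ), u * S u) / ((k : ℝ) - 2) * a ^ 2 := by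
        rw [hsub]; ring
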